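/- arXiv:1908.02824 — 3 statements merged into one kernel-verified Lean document; each statement's English description precedes it below -/
import Mathlib

section
/- For every natural number μ there is a constant C > 0 depending only on μ with the following property. Let X be a metric space, ε > 0, and (x_i)_{i∈I} a finite family of points of X such that every point of X is within distance ε/2 of some x_i, and for every point x ∈ X there are at most μ indices i with d(x, x_i) < ε. For each i define φ̂_i(x) = 1 if d(x_i, x) ≤ ε/2, φ̂_i(x) = 2 − 2ε⁻¹ d(x_i, x) if ε/2 ≤ d(x_i, x) ≤ ε, and φ̂_i(x) = 0 if d(x_i, x) ≥ ε; and set φ_i(x) = φ̂_i(x) / Σ_{j∈I} φ̂_j(x). Then the map φ : X → ℝ^I defined by φ(x) = (φ_i(x))_{i∈I}, where ℝ^I carries the Euclidean norm, is Lipschitz with constant C/ε. -/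
open Metric

/-- clamp formula for the tent function -/
lemma tent_eq_clamp {ε d : ℝ} (hε : 0 < ε) (hd : 0 ≤ d) :
    (if d ≤ ε / 2 then (1:ℝ) else if d ≤ ε then 2 - 2 * ε⁻¹ * d else 0)
      = min 1 (max 0 (2 - 2 * ε⁻¹ * d)) := by
  have hinv : 0 < ε⁻¹ := inv_pos.2 hε
  have hie : ε⁻¹ * ε = 1 := inv_mul_cancel₀ hε.ne'
  split_ifs with h1 h2
  · have h : (1:ℝ) ≤ 2 - 2 * ε⁻¹ * d := by nlinarith [mul_le_mul_of_nonneg_left h1 hinv.le]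
    rw [max_eq_right (by linarith), min_eq_left h]
  · have h0 : (0:ℝ) ≤ 2 - 2 * ε⁻¹ * d := by nlinarith [mul_le_mul_of_nonneg_left h2 hinv.le]
    have h1' : 2 - 2 * ε⁻¹ * d ≤ 1 := by
      push_neg at h1
      nlinarith [mul_le_mul_of_nonneg_left h1.le hinv.le]
    rw [max_eq_right h0, min_eq_right h1']
  · push_neg at h2
    have h : 2 - 2 * ε⁻¹ * d ≤ 0 := by nlinarith [mul_le_mul_of_nonneg_left h2.le hinv.le]
    rw [max_eq_left h, min_eq_right zero_le_one]

lemma clamp_lip (u v : ℝ) : |min 1 (max 0 u) - min 1 (max 0 v)| ≤ |u - v| := by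
  refine (abs_min_sub_min_le_max 1 (max 0 u) 1 (max 0 v)).trans ?_
  rw [sub_self, abs_zero, max_eq_right (abs_nonneg _), max_comm 0 u, max_comm 0 v]
  exact abs_max_sub_max_le_abs u v 0

lemma div_sub_div_abs_le {u v Sa Sb : ℝ} (hSa : 1 ≤ Sa) (hSb : 1 ≤ Sb)
    (hv : 0 ≤ v) (hvSb : v ≤ Sb) :
    |u / Sa - v / Sb| ≤ |u - v| + |Sa - Sb| := by
  have hSa0 : (0:ℝ) < Sa := by linarith
  have hSb0 : (0:ℝ) < Sb := by linarith
  have heq : u / Sa - v / Sb = (u - v) / Sa + v * (Sb - Sa) / (Sa * Sb) := by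
    field_simp; ring
  rw [heq]
  refine (abs_add_le _ _).trans (add_le_add ?_ ?_)
  · rw [abs_div, abs_of_pos hSa0]
    exact div_le_self (abs_nonneg _) hSa
  · rw [abs_div, abs_mul, abs_of_nonneg hv, abs_of_pos (mul_pos hSa0 hSb0),
      abs_sub_comm Sb Sa]
    rw [div_le_iff₀ (mul_pos hSa0 hSb0)]
    have : v ≤ Sa * Sb := by nlinarith
    nlinarith [abs_nonneg (Sa - Sb)]

/-- For every multiplicity bound `μ` there is `C > 0` such that the partition of
unity built from the tent functions `φ̂_i` subordinate to a cover of `X` by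
`ε`-balls with multiplicity at most `μ` gives a `C/ε`-Lipschitz barycentric map
`φ : X → ℝ^I` (with the Euclidean norm). -/
theorem partition_of_unity_lipschitz (μ : ℕ) :
    ∃ C : ℝ, 0 < C ∧
      ∀ (X : Type) [MetricSpace X] (ε : ℝ), 0 < ε →
      ∀ (I : Type) [Fintype I] (x : I → X),
        (∀ y : X, ∃ i, dist y (x i) ≤ ε / 2) →
        (∀ y : X, ({i : I | dist y (x i) < ε}).ncard ≤ μ) →
        ∀ (φhat : I → X → ℝ),
          (φhat = fun i y =>
            if dist (x i) y ≤ ε / 2 then 1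
            else if dist (x i) y ≤ ε then 2 - 2 * ε⁻¹ * dist (x i) y
            else 0) →
        ∀ (φ : X → EuclideanSpace ℝ I),
          (φ = fun y => (WithLp.toLp 2 (fun i => φhat i y / ∑ j, φhat j y) : EuclideanSpace ℝ I)) →
        ∀ a b : X, dist (φ a) (φ b) ≤ (C / ε) * dist a b := by
  refine ⟨8 * μ ^ 2 + 4 * μ + 1, by positivity, ?_⟩
  intro X _ ε hε I _ x hcover hmult φhat hφhat φ hφ a b
  subst hφhat hφ
  classical
  set φhat : I → X → ℝ := fun i y =>
    if dist (x i) y ≤ ε / 2 then 1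
    else if dist (x i) y ≤ ε then 2 - 2 * ε⁻¹ * dist (x i) y
    else 0 with hφhat
  have hclamp : ∀ i y, φhat i y = min 1 (max 0 (2 - 2 * ε⁻¹ * dist (x i) y)) :=
    fun i y => tent_eq_clamp hε dist_nonneg
  -- basic bounds
  have h0 : ∀ i y, 0 ≤ φhat i y := fun i y => by
    rw [hclamp]; exact le_min zero_le_one (le_max_left _ _)
  have h1 : ∀ i y, φhat i y ≤ 1 := fun i y => by rw [hclamp]; exact min_le_left _ _
  -- vanishing outside the ball
  have hzero : ∀ i y, ε ≤ dist (x i) y → φhat i y = 0 := by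
    intro i y h
    rw [hφhat]
    simp only
    rw [if_neg (by linarith)]
    split_ifs with h'
    · have he : dist (x i) y = ε := le_antisymm h' h
      rw [he, mul_assoc, inv_mul_cancel₀ hε.ne']
      ring
    · rfl
  -- sum ≥ 1
  have hS1 : ∀ y : X, (1:ℝ) ≤ ∑ j, φhat j y := by
    intro y
    obtain ⟨i, hi⟩ := hcover y
    have : φhat i y = 1 := by
      rw [hφhat]; simp only; rw [if_pos (by rwa [dist_comm])]
    calc (1:ℝ) = φhat i y := this.symm
      _ ≤ ∑ j, φhat j y := Finset.single_le_sum (fun j _ => h0 j y) (Finset.mem_univ i)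
  -- Lipschitz bound for each tent
  have hlip : ∀ i, |φhat i a - φhat i b| ≤ 2 * ε⁻¹ * dist a b := by
    intro i
    rw [hclamp, hclamp]
    refine (clamp_lip _ _).trans ?_
    have : (2 - 2 * ε⁻¹ * dist (x i) a) - (2 - 2 * ε⁻¹ * dist (x i) b)
        = 2 * ε⁻¹ * (dist (x i) b - dist (x i) a) := by ring
    rw [this, abs_mul, abs_of_pos (by positivity : (0:ℝ) < 2 * ε⁻¹)]
    gcongr
    rw [dist_comm (x i) b, dist_comm (x i) a, dist_comm a b]
    exact abs_dist_sub_le b a (x i)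
  -- active index set
  set A : Finset I := (Finset.univ.filter fun i => dist a (x i) < ε) ∪
      (Finset.univ.filter fun i => dist b (x i) < ε) with hA
  have hcardfilter : ∀ y : X, ((Finset.univ.filter fun i => dist y (x i) < ε).card : ℕ) ≤ μ := by
    intro y
    have := hmult y
    rwa [show {i : I | dist y (x i) < ε} = ↑(Finset.univ.filter fun i => dist y (x i) < ε) by
      ext i; simp, Set.ncard_coe_finset] at this
  have hAcard : (A.card : ℝ) ≤ 2 * μ := by
    have h := (Finset.card_union_le (Finset.univ.filter fun i => dist a (x i) < ε)
      (Finset.univ.filter fun i => dist b (x i) < ε)).trans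
      (add_le_add (hcardfilter a) (hcardfilter b))
    rw [← hA] at h
    calc (A.card : ℝ) ≤ ((μ + μ : ℕ) : ℝ) := by exact_mod_cast h
      _ = 2 * μ := by push_cast; ring
  have hAzero : ∀ i ∉ A, φhat i a = 0 ∧ φhat i b = 0 := by
    intro i hi
    rw [hA, Finset.mem_union, Finset.mem_filter, Finset.mem_filter] at hi
    push_neg at hi
    obtain ⟨hia, hib⟩ := hi
    constructor
    · exact hzero i a (by rw [dist_comm]; exact hia (Finset.mem_univ i))
    · exact hzero i b (by rw [dist_comm]; exact hib (Finset.mem_univ i))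
  set d := dist a b with hdd
  have hd : 0 ≤ d := dist_nonneg
  set Sa := ∑ j, φhat j a with hSa
  set Sb := ∑ j, φhat j b with hSb
  have hSdiff : |Sa - Sb| ≤ 2 * μ * (2 * ε⁻¹ * d) := by
    rw [hSa, hSb, ← Finset.sum_sub_distrib]
    refine (Finset.abs_sum_le_sum_abs _ _).trans ?_
    calc ∑ i, |φhat i a - φhat i b|
        = ∑ i ∈ A, |φhat i a - φhat i b| := by
          refine (Finset.sum_subset (Finset.subset_univ A) ?_).symm
          intro i _ hi
          rw [(hAzero i hi).1, (hAzero i hi).2, sub_zero, abs_zero]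
      _ ≤ A.card • (2 * ε⁻¹ * d) :=
          Finset.sum_le_card_nsmul A _ _ (fun i _ => hlip i)
      _ = (A.card : ℝ) * (2 * ε⁻¹ * d) := nsmul_eq_mul _ _
      _ ≤ 2 * μ * (2 * ε⁻¹ * d) :=
          mul_le_mul_of_nonneg_right hAcard (by positivity)
  have hidx : ∀ i, |φhat i a / Sa - φhat i b / Sb|
      ≤ 2 * ε⁻¹ * d + 2 * μ * (2 * ε⁻¹ * d) := by
    intro i
    refine (div_sub_div_abs_le (hS1 a) (hS1 b) (h0 i b) ?_).trans
      (add_le_add (hlip i) hSdiff)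
    exact Finset.single_le_sum (fun j _ => h0 j b) (Finset.mem_univ i)
  -- Euclidean distance bounded by ℓ¹ distance
  rw [EuclideanSpace.dist_eq]
  calc Real.sqrt (∑ i, dist (φhat i a / Sa) (φhat i b / Sb) ^ 2)
      ≤ Real.sqrt ((∑ i, dist (φhat i a / Sa) (φhat i b / Sb)) ^ 2) :=
        Real.sqrt_le_sqrt (Finset.sum_sq_le_sq_sum_of_nonneg (fun i _ => dist_nonneg))
    _ = ∑ i, dist (φhat i a / Sa) (φhat i b / Sb) :=
        Real.sqrt_sq (Finset.sum_nonneg fun i _ => dist_nonneg)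
    _ = ∑ i, |φhat i a / Sa - φhat i b / Sb| := by simp [Real.dist_eq]
    _ = ∑ i ∈ A, |φhat i a / Sa - φhat i b / Sb| := by
        refine (Finset.sum_subset (Finset.subset_univ A) ?_).symm
        intro i _ hi
        rw [(hAzero i hi).1, (hAzero i hi).2, zero_div, zero_div, sub_zero, abs_zero]
    _ ≤ A.card • (2 * ε⁻¹ * d + 2 * μ * (2 * ε⁻¹ * d)) :=
        Finset.sum_le_card_nsmul A _ _ (fun i _ => hidx i)
    _ = (A.card : ℝ) * (2 * ε⁻¹ * d + 2 * μ * (2 * ε⁻¹ * d)) := nsmul_eq_mul _ _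
    _ ≤ 2 * μ * (2 * ε⁻¹ * d + 2 * μ * (2 * ε⁻¹ * d)) :=
        mul_le_mul_of_nonneg_right hAcard (by positivity)
    _ ≤ (8 * (μ:ℝ) ^ 2 + 4 * μ + 1) / ε * d := by
        rw [div_eq_mul_inv]
        have hinv : (0:ℝ) < ε⁻¹ := inv_pos.2 hε
        nlinarith [mul_nonneg hinv.le hd, sq_nonneg (μ:ℝ)]
end

section
/- For every natural number k there is a constant L > 0 depending only on k with the following property. Let n ≥ 1 and let v_0, …, v_k be points of the unit sphere S^n ⊆ ℝ^{n+1} with ‖v_i − v_j‖ ≤ 1 for all i, j. Then the map sending a point t = (t_0, …, t_k) of the standard simplex Δ^k = {t ∈ ℝ^{k+1} : t_i ≥ 0, Σ t_i = 1} (with the Euclidean metric) to ‖Σ_{i=0}^{k} t_i v_i‖⁻¹ · (Σ_{i=0}^{k} t_i v_i) is a well-defined L-Lipschitz map from Δ^k to S^n. -/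
open Finset

lemma coord_abs_le_norm {m : ℕ} (x : EuclideanSpace ℝ (Fin m)) (i : Fin m) :
    |x i| ≤ ‖x‖ := by
  rw [EuclideanSpace.norm_eq]
  rw [← Real.sqrt_sq_eq_abs]
  apply Real.sqrt_le_sqrt
  have : (x i)^2 = ‖x i‖^2 := by rw [Real.norm_eq_abs, sq_abs]
  rw [this]
  exact Finset.single_le_sum (f := fun j => ‖x j‖^2) (fun j _ => by positivity)
    (Finset.mem_univ i)

lemma normalize_lip {E : Type*} [NormedAddCommGroup E] [InnerProductSpace ℝ E]
    (x y : E) (hx : (1:ℝ)/2 ≤ ‖x‖) (hy : (1:ℝ)/2 ≤ ‖y‖) :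
    ‖‖x‖⁻¹ • x - ‖y‖⁻¹ • y‖ ≤ 4 * ‖x - y‖ := by
  have ha : (0:ℝ) < ‖x‖ := by linarith
  have hb : (0:ℝ) < ‖y‖ := by linarith
  have heq : ‖x‖⁻¹ • x - ‖y‖⁻¹ • y = ‖x‖⁻¹ • (x - y) + (‖x‖⁻¹ - ‖y‖⁻¹) • y := by
    rw [smul_sub, sub_smul]; abel
  rw [heq]
  have h1 : ‖‖x‖⁻¹ • (x - y)‖ = ‖x‖⁻¹ * ‖x - y‖ := by
    rw [norm_smul, Real.norm_eq_abs, abs_of_pos (by positivity)]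
  have h2 : ‖(‖x‖⁻¹ - ‖y‖⁻¹) • y‖ = |‖x‖⁻¹ - ‖y‖⁻¹| * ‖y‖ := by
    rw [norm_smul, Real.norm_eq_abs]
  have habs : |‖x‖ - ‖y‖| ≤ ‖x - y‖ := abs_norm_sub_norm_le x y
  have h3 : |‖x‖⁻¹ - ‖y‖⁻¹| = |‖x‖ - ‖y‖| / (‖x‖ * ‖y‖) := by
    rw [inv_sub_inv ha.ne' hb.ne', abs_div, abs_mul, abs_of_pos ha, abs_of_pos hb,
      abs_sub_comm]
  have hinvx : ‖x‖⁻¹ ≤ 2 := by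
    rw [show (2:ℝ) = ((1:ℝ)/2)⁻¹ by norm_num]
    exact inv_anti₀ (by norm_num) hx
  calc ‖‖x‖⁻¹ • (x - y) + (‖x‖⁻¹ - ‖y‖⁻¹) • y‖
      ≤ ‖‖x‖⁻¹ • (x - y)‖ + ‖(‖x‖⁻¹ - ‖y‖⁻¹) • y‖ := norm_add_le _ _
    _ = ‖x‖⁻¹ * ‖x - y‖ + |‖x‖ - ‖y‖| / (‖x‖ * ‖y‖) * ‖y‖ := by rw [h1, h2, h3]
    _ = ‖x‖⁻¹ * ‖x - y‖ + |‖x‖ - ‖y‖| * ‖x‖⁻¹ := by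
        field_simp
    _ ≤ 2 * ‖x - y‖ + ‖x - y‖ * 2 := by
        gcongr
    _ ≤ 4 * ‖x - y‖ := by linarith

/-- For every `k` there is `L > 0` such that: for unit vectors `v 0, …, v k` in
`ℝ^{n+1}` (`n ≥ 1`) with pairwise distances at most 1, the radially normalized
barycentric map from the standard simplex `Δ^k` to the unit sphere is well
defined and `L`-Lipschitz. -/
theorem simplex_flattening_lipschitz (k : ℕ) :
    ∃ L : ℝ, 0 < L ∧
      ∀ (n : ℕ), 1 ≤ n →
      ∀ v : Fin (k + 1) → EuclideanSpace ℝ (Fin (n + 1)),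
        (∀ i, ‖v i‖ = 1) → (∀ i j, ‖v i - v j‖ ≤ 1) →
        (∀ t : EuclideanSpace ℝ (Fin (k + 1)),
            (∀ i, 0 ≤ t i) → (∑ i, t i) = 1 → (∑ i, t i • v i) ≠ 0) ∧
        (∀ t : EuclideanSpace ℝ (Fin (k + 1)),
            (∀ i, 0 ≤ t i) → (∑ i, t i) = 1 →
            ‖‖∑ i, t i • v i‖⁻¹ • ∑ i, t i • v i‖ = 1) ∧
        (∀ s t : EuclideanSpace ℝ (Fin (k + 1)),
            (∀ i, 0 ≤ s i) → (∑ i, s i) = 1 → (∀ i, 0 ≤ t i) → (∑ i, t i) = 1 →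
            ‖(‖∑ i, s i • v i‖⁻¹ • ∑ i, s i • v i) -
              (‖∑ i, t i • v i‖⁻¹ • ∑ i, t i • v i)‖ ≤ L * dist s t) := by
  refine ⟨4 * (k + 1), by positivity, ?_⟩
  intro n hn v hv hd
  -- inner products are at least 1/2
  have hinner : ∀ i j, (1:ℝ)/2 ≤ inner ℝ (v i) (v j) := by
    intro i j
    have h := hd i j
    have hsq : ‖v i - v j‖^2 ≤ 1 := by nlinarith [norm_nonneg (v i - v j)]
    have hexp := norm_sub_sq_real (v i) (v j)
    rw [hv i, hv j] at hexp
    nlinarith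
  -- lower bound on the norm of convex combinations
  have hlow : ∀ t : EuclideanSpace ℝ (Fin (k+1)), (∀ i, 0 ≤ t i) → (∑ i, t i) = 1 →
      (1:ℝ)/2 ≤ ‖∑ i, t i • v i‖ := by
    intro t ht hsum
    have hns : ‖∑ i, t i • v i‖^2 = ∑ i, ∑ j, t i * (t j * inner ℝ (v i) (v j)) := by
      rw [← real_inner_self_eq_norm_sq, sum_inner]
      refine Finset.sum_congr rfl fun i _ => ?_
      rw [real_inner_smul_left, inner_sum]
      rw [Finset.mul_sum]
      refine Finset.sum_congr rfl fun j _ => ?_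
      rw [real_inner_smul_right]
    have h2 : (1:ℝ)/2 ≤ ‖∑ i, t i • v i‖^2 := by
      rw [hns]
      have hlhs : ∑ i, ∑ j, t i * (t j * ((1:ℝ)/2)) = 1/2 := by
        have : ∀ i : Fin (k+1), ∑ j, t i * (t j * ((1:ℝ)/2)) = t i * (1/2) := by
          intro i
          rw [← Finset.mul_sum, ← Finset.sum_mul, hsum]; ring
        rw [Finset.sum_congr rfl fun i _ => this i, ← Finset.sum_mul, hsum]; ring
      rw [← hlhs]
      refine Finset.sum_le_sum fun i _ => Finset.sum_le_sum fun j _ => ?_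
      have h := mul_le_mul_of_nonneg_left (hinner i j) (mul_nonneg (ht i) (ht j))
      nlinarith
    nlinarith [norm_nonneg (∑ i, t i • v i)]
  have hne : ∀ t : EuclideanSpace ℝ (Fin (k+1)), (∀ i, 0 ≤ t i) → (∑ i, t i) = 1 →
      (∑ i, t i • v i) ≠ 0 := by
    intro t ht hsum h0
    have := hlow t ht hsum
    rw [h0, norm_zero] at this
    linarith
  refine ⟨hne, ?_, ?_⟩
  · intro t ht hsum
    have h0 := hne t ht hsum
    have hp : (0:ℝ) < ‖∑ i, t i • v i‖ := norm_pos_iff.mpr h0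
    rw [norm_smul, Real.norm_eq_abs, abs_of_pos (inv_pos.mpr hp)]
    exact inv_mul_cancel₀ (norm_ne_zero_iff.mpr h0)
  · intro s t hs hsums ht hsumt
    have hx := hlow s hs hsums
    have hy := hlow t ht hsumt
    have key := normalize_lip (∑ i, s i • v i) (∑ i, t i • v i) hx hy
    have hdiff : ‖(∑ i, s i • v i) - (∑ i, t i • v i)‖ ≤ (k + 1) * dist s t := by
      have heq : (∑ i, s i • v i) - (∑ i, t i • v i) = ∑ i, (s i - t i) • v i := by
        rw [← Finset.sum_sub_distrib]
        exact Finset.sum_congr rfl fun i _ => (sub_smul _ _ _).symm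
      rw [heq]
      calc ‖∑ i, (s i - t i) • v i‖ ≤ ∑ i, ‖(s i - t i) • v i‖ :=
            norm_sum_le _ _
        _ = ∑ i, |s i - t i| := by
            refine Finset.sum_congr rfl fun i _ => ?_
            rw [norm_smul, Real.norm_eq_abs, hv i, mul_one]
        _ ≤ ∑ _i : Fin (k+1), dist s t := by
            refine Finset.sum_le_sum fun i _ => ?_
            have : s i - t i = (s - t) i := rfl
            rw [this, dist_eq_norm]
            exact coord_abs_le_norm (s - t) i
        _ = (k + 1) * dist s t := by
            rw [Finset.sum_const, Finset.card_univ, Fintype.card_fin, nsmul_eq_mul]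
            push_cast; ring
    calc ‖(‖∑ i, s i • v i‖⁻¹ • ∑ i, s i • v i) - (‖∑ i, t i • v i‖⁻¹ • ∑ i, t i • v i)‖
        ≤ 4 * ‖(∑ i, s i • v i) - (∑ i, t i • v i)‖ := key
      _ ≤ 4 * ((k + 1) * dist s t) := by linarith
      _ = 4 * (k + 1) * dist s t := by ring
end

section
/- Let n ≥ 1, let X be a metric space, let L ≥ 0, and let f : X → S^n be a continuous map which is Lipschitz with constant L and is not nullhomotopic. Then μH^n(S^n) ≤ L^n · μH^n(X), where μH^n denotes the n-dimensional Hausdorff measure. -/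
open MeasureTheory
open scoped NNReal ENNReal

section Aux

variable {E : Type*} [NormedAddCommGroup E] [NormedSpace ℝ E] {X : Type*} [TopologicalSpace X]

theorem surjective_of_not_nullhomotopic (f : C(X, Metric.sphere (0 : E) 1))
    (hnull : ¬ f.Nullhomotopic) : Function.Surjective f := by
  intro p
  by_contra hp
  push_neg at hp
  apply hnull
  refine ⟨-p, ?_⟩
  have hv : ∀ (t : unitInterval) (x : X),
      ((1 - (t : ℝ)) • (f x : E) - (t : ℝ) • (p : E)) ≠ 0 := by
    intro t x h
    have h' : (1 - (t : ℝ)) • (f x : E) = (t : ℝ) • (p : E) := by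
      rwa [sub_eq_zero] at h
    have hfx : ‖(f x : E)‖ = 1 := by
      simpa using mem_sphere_zero_iff_norm.mp (f x).2
    have hpn : ‖(p : E)‖ = 1 := by
      simpa using mem_sphere_zero_iff_norm.mp p.2
    have hnorm : |1 - (t : ℝ)| = |(t : ℝ)| := by
      have := congrArg norm h'
      simpa [norm_smul, hfx, hpn, Real.norm_eq_abs] using this
    have ht0 : (0:ℝ) ≤ t := t.2.1
    have ht1 : (t:ℝ) ≤ 1 := t.2.2
    have : (t : ℝ) = 1/2 := by
      rw [abs_of_nonneg (by linarith), abs_of_nonneg ht0] at hnorm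
      linarith
    rw [this] at h'
    have h'' : (1/2 : ℝ) • (f x : E) = (1/2 : ℝ) • (p : E) := by
      norm_num at h'; rw [h']
    have : (f x : E) = (p : E) :=
      smul_right_injective E (by norm_num : (1/2 : ℝ) ≠ 0) h''
    exact hp x (Subtype.ext this)
  let v : unitInterval × X → E := fun q => (1 - (q.1 : ℝ)) • (f q.2 : E) - (q.1 : ℝ) • (p : E)
  have hvc : Continuous v := by fun_prop
  have hvne : ∀ q, v q ≠ 0 := fun q => hv q.1 q.2
  constructor
  refine { toFun := fun q => ⟨‖v q‖⁻¹ • v q, ?_⟩, continuous_toFun := ?_, map_zero_left := ?_,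
           map_one_left := ?_ }
  · rw [mem_sphere_zero_iff_norm, norm_smul, norm_inv, norm_norm,
      inv_mul_cancel₀ (norm_ne_zero_iff.mpr (hvne q))]
  · exact Continuous.subtype_mk (by fun_prop (disch := exact fun q => norm_ne_zero_iff.mpr (hvne q))) _
  · intro x
    ext
    have hfx : ‖(f x : E)‖ = 1 := by simpa using mem_sphere_zero_iff_norm.mp (f x).2
    simp [v, hfx]
  · intro x
    ext
    have hpn : ‖(p : E)‖ = 1 := by simpa using mem_sphere_zero_iff_norm.mp p.2
    simp [v, hpn]

end Aux

/-- A non-nullhomotopic `L`-Lipschitz map from a metric space `X` to the unit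
sphere `S^n` forces `μH^n(S^n) ≤ L^n · μH^n(X)`. -/
theorem hausdorff_measure_le_of_not_nullhomotopic {X : Type*} [MetricSpace X]
    [MeasurableSpace X] [BorelSpace X] {n : ℕ} (hn : 1 ≤ n) {L : ℝ} (hL : 0 ≤ L)
    (f : C(X, Metric.sphere (0 : EuclideanSpace ℝ (Fin (n + 1))) 1))
    (hf : ∀ a b : X, dist (f a) (f b) ≤ L * dist a b)
    (hnull : ¬ f.Nullhomotopic) :
    μH[(n : ℝ)] (Set.univ : Set (Metric.sphere (0 : EuclideanSpace ℝ (Fin (n + 1))) 1))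
      ≤ ENNReal.ofReal (L ^ n) * μH[(n : ℝ)] (Set.univ : Set X) := by
  have hsurj := surjective_of_not_nullhomotopic f hnull
  have himg : (Set.univ : Set (Metric.sphere (0 : EuclideanSpace ℝ (Fin (n + 1))) 1))
      = f '' Set.univ := by
    rw [Set.image_univ, Set.range_eq_univ.mpr hsurj]
  have hlip : LipschitzWith L.toNNReal f := by
    intro a b
    rw [edist_dist, edist_dist]
    calc ENNReal.ofReal (dist (f a) (f b)) ≤ ENNReal.ofReal (L * dist a b) :=
          ENNReal.ofReal_le_ofReal (hf a b)
      _ = _ := by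
          rw [ENNReal.ofReal_mul hL]; rfl
  calc μH[(n : ℝ)] (Set.univ : Set (Metric.sphere (0 : EuclideanSpace ℝ (Fin (n + 1))) 1))
      = μH[(n : ℝ)] (f '' Set.univ) := by rw [himg]
    _ ≤ ((L.toNNReal : ℝ≥0) : ℝ≥0∞) ^ (n : ℝ) * μH[(n : ℝ)] (Set.univ : Set X) :=
        hlip.hausdorffMeasure_image_le (by positivity) _
    _ = ENNReal.ofReal (L ^ n) * μH[(n : ℝ)] (Set.univ : Set X) := by
        rw [ENNReal.rpow_natCast, ENNReal.ofReal_pow hL]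
        rfl
end
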